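/- Let $f : \mathbb{R} \to \mathbb{R}$ be a function, and let $G_f = \{(x, f(x)) : x \in \mathbb{R}\} \subset \mathbb{R}^2$ be its graph. Then there exists a vertical line segment $L \subset \mathbb{R}^2$ (a set of the form $\{p\} \times [c, c+\ell]$ with $\ell > 0$) such that $G_f + L$ has empty interior if and only if $f$ is uniformly oscillated, i.e., $\inf_{x \in \mathbb{R}} \omega_f(x) > 0$, where $\omega_f(x) = \lim_{\delta \to 0^+} \left[\sup_{y \in [x-\delta, x+\delta]} f(y) - \inf_{y \in [x-\delta, x+\delta]} f(y)\right]$ is the oscillation of $f$ at $x$ (taking values in $[0, \infty]$). -/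

import Mathlib

open Pointwise ENNReal

/-- The oscillation of `f : ℝ → ℝ` at `x`, valued in `[0, ∞]`: the limit as `δ → 0⁺`
(equivalently, the infimum over `δ > 0`, by monotonicity in `δ`) of
`sup_{y ∈ [x-δ,x+δ]} f y - inf_{y ∈ [x-δ,x+δ]} f y`, i.e. of the diameter of
`f '' [x-δ, x+δ]`. -/
noncomputable def oscAt (f : ℝ → ℝ) (x : ℝ) : ℝ≥0∞ :=
  ⨅ (δ : ℝ) (_ : 0 < δ), EMetric.diam (f '' Set.Icc (x - δ) (x + δ))

/-- For `f : ℝ → ℝ` with graph `G_f`, there exists a vertical line segment `L` such that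
`G_f + L` has empty interior if and only if `f` is uniformly oscillated, i.e.
`inf_x ω_f(x) > 0`. -/
theorem exists_vertical_segment_graph_add_empty_interior_iff_uniformly_oscillated
    (f : ℝ → ℝ) :
    (∃ (p c ℓ : ℝ), 0 < ℓ ∧
      interior ({q : ℝ × ℝ | ∃ x : ℝ, q = (x, f x)} + {p} ×ˢ Set.Icc c (c + ℓ)) = ∅) ↔
    0 < ⨅ x : ℝ, oscAt f x := by
  constructor
  · rintro ⟨p, c, ℓ, hℓ, hempty⟩
    by_contra h
    have h0 : ⨅ x : ℝ, oscAt f x = 0 := le_antisymm (not_lt.mp h) zero_le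
    have h1 : ⨅ x : ℝ, oscAt f x < ENNReal.ofReal (ℓ / 3) := by
      rw [h0]; exact ENNReal.ofReal_pos.mpr (by linarith)
    obtain ⟨x, hx⟩ := iInf_lt_iff.mp h1
    rw [oscAt] at hx
    obtain ⟨δ, hδd⟩ := iInf_lt_iff.mp hx
    obtain ⟨hδ, hd⟩ := iInf_lt_iff.mp hδd
    have key : ∀ y ∈ Set.Icc (x - δ) (x + δ), dist (f y) (f x) < ℓ / 3 := by
      intro y hy
      have hxm : x ∈ Set.Icc (x - δ) (x + δ) := ⟨by linarith, by linarith⟩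
      have h2 : edist (f y) (f x) < ENNReal.ofReal (ℓ / 3) :=
        lt_of_le_of_lt (EMetric.edist_le_diam_of_mem (Set.mem_image_of_mem f hy)
          (Set.mem_image_of_mem f hxm)) hd
      rw [edist_dist] at h2
      exact (ENNReal.ofReal_lt_ofReal_iff (by linarith)).mp h2
    set S := {q : ℝ × ℝ | ∃ x : ℝ, q = (x, f x)} + {p} ×ˢ Set.Icc c (c + ℓ) with hSdef
    set R := Set.Ioo (x - δ + p) (x + δ + p) ×ˢ
      Set.Ioo (f x + c + ℓ / 3) (f x + c + 2 * ℓ / 3) with hRdef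
    have hRopen : IsOpen R := isOpen_Ioo.prod isOpen_Ioo
    have hRsub : R ⊆ S := by
      rintro ⟨u, v⟩ ⟨hu, hv⟩
      simp only [Set.mem_Ioo] at hu hv
      have hup : u - p ∈ Set.Icc (x - δ) (x + δ) :=
        ⟨by linarith [hu.1], by linarith [hu.2]⟩
      have hfd := key _ hup
      rw [Real.dist_eq, abs_lt] at hfd
      have hbmem : (p, v - f (u - p)) ∈ ({p} ×ˢ Set.Icc c (c + ℓ) : Set (ℝ × ℝ)) := by
        simp only [Set.mem_prod, Set.mem_singleton_iff, Set.mem_Icc]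
        exact ⟨trivial, by linarith [hv.1, hfd.2], by linarith [hv.2, hfd.1]⟩
      exact Set.mem_add.mpr ⟨(u - p, f (u - p)), ⟨u - p, rfl⟩,
        (p, v - f (u - p)), hbmem, by simp [Prod.ext_iff]⟩
    have hmem : (x + p, f x + c + ℓ / 2) ∈ R := by
      constructor <;> simp only [Set.mem_Ioo] <;> constructor <;> linarith
    have : (x + p, f x + c + ℓ / 2) ∈ interior S := interior_maximal hRsub hRopen hmem
    rw [hempty] at this
    exact this
  · intro hpos
    set ε := ⨅ x : ℝ, oscAt f x with hε
    set η := min 1 ε with hηdef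
    have hη0 : 0 < η := lt_min one_pos hpos
    have hηtop : η ≠ ⊤ := ne_top_of_le_ne_top one_ne_top (min_le_left _ _)
    set ℓ := η.toReal with hℓdef
    have hℓ : 0 < ℓ := ENNReal.toReal_pos hη0.ne' hηtop
    refine ⟨0, 0, ℓ, hℓ, ?_⟩
    by_contra hne
    obtain ⟨⟨q1, q2⟩, hq⟩ := Set.nonempty_iff_ne_empty.mpr hne
    have hS : ({q : ℝ × ℝ | ∃ x : ℝ, q = (x, f x)} + {(0:ℝ)} ×ˢ Set.Icc 0 (0 + ℓ)) ∈
        nhds (q1, q2) := mem_interior_iff_mem_nhds.mp hq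
    rw [nhds_prod_eq, Filter.mem_prod_iff] at hS
    obtain ⟨U, hU, V, hV, hUV⟩ := hS
    obtain ⟨r1, hr1, hball1⟩ := Metric.mem_nhds_iff.mp hU
    obtain ⟨r2, hr2, hball2⟩ := Metric.mem_nhds_iff.mp hV
    have hmem : ∀ x' ∈ Metric.ball q1 r1, ∀ t ∈ Metric.ball q2 r2,
        f x' ≤ t ∧ t ≤ f x' + ℓ := by
      intro x' hx' t ht
      have : (x', t) ∈ ({q : ℝ × ℝ | ∃ x : ℝ, q = (x, f x)} +
          {(0:ℝ)} ×ˢ Set.Icc 0 (0 + ℓ)) :=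
        hUV ⟨hball1 hx', hball2 ht⟩
      obtain ⟨a, ⟨x0, ha⟩, b, hb, hab⟩ := Set.mem_add.mp this
      obtain ⟨hb1, hb2⟩ := hb
      subst ha
      have h1 : x0 + b.1 = x' := congrArg Prod.fst hab
      have h2 : f x0 + b.2 = t := congrArg Prod.snd hab
      simp only [Set.mem_singleton_iff] at hb1
      have hx0 : x0 = x' := by rw [hb1] at h1; linarith
      subst hx0
      simp only [Set.mem_Icc, zero_add] at hb2
      constructor <;> linarith [hb2.1, hb2.2]
    have hb1 : q2 - r2 / 2 ∈ Metric.ball q2 r2 := by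
      simp only [Metric.mem_ball, Real.dist_eq]
      rw [abs_lt]; constructor <;> linarith
    have hb2 : q2 + r2 / 2 ∈ Metric.ball q2 r2 := by
      simp only [Metric.mem_ball, Real.dist_eq]
      rw [abs_lt]; constructor <;> linarith
    have hfbound : ∀ x' ∈ Metric.ball q1 r1,
        q2 + r2 / 2 - ℓ ≤ f x' ∧ f x' ≤ q2 - r2 / 2 := by
      intro x' hx'
      have A := hmem x' hx' _ hb1
      have B := hmem x' hx' _ hb2
      exact ⟨by linarith [B.2], A.1⟩
    have hosc : oscAt f q1 ≤ EMetric.diam (f '' Set.Icc (q1 - r1 / 2) (q1 + r1 / 2)) :=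
      iInf_le_of_le (r1 / 2) (iInf_le _ (half_pos hr1))
    have hdiam : EMetric.diam (f '' Set.Icc (q1 - r1 / 2) (q1 + r1 / 2)) ≤
        ENNReal.ofReal (ℓ - r2) := by
      apply EMetric.diam_le
      rintro _ ⟨y, hy, rfl⟩ _ ⟨z, hz, rfl⟩
      have hyb : y ∈ Metric.ball q1 r1 := by
        simp only [Metric.mem_ball, Real.dist_eq]
        rw [abs_lt]; constructor <;> [linarith [hy.1]; linarith [hy.2]]
      have hzb : z ∈ Metric.ball q1 r1 := by
        simp only [Metric.mem_ball, Real.dist_eq]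
        rw [abs_lt]; constructor <;> [linarith [hz.1]; linarith [hz.2]]
      have hfy := hfbound y hyb
      have hfz := hfbound z hzb
      rw [edist_dist]
      apply ENNReal.ofReal_le_ofReal
      rw [Real.dist_eq, abs_le]
      constructor <;> linarith [hfy.1, hfy.2, hfz.1, hfz.2]
    have hlt : oscAt f q1 < η := by
      calc oscAt f q1 ≤ ENNReal.ofReal (ℓ - r2) := hosc.trans hdiam
        _ < ENNReal.ofReal ℓ := (ENNReal.ofReal_lt_ofReal_iff hℓ).mpr (by linarith)
        _ = η := ENNReal.ofReal_toReal hηtop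
    have : ε ≤ oscAt f q1 := iInf_le _ q1
    exact absurd hlt (not_lt.mpr ((min_le_right 1 ε).trans this))
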